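/- Let n ≥ 3 and let i be an integer with 0 ≤ i ≤ ⌊(n−1)/2⌋ − 1. Let H be a graph on n−1 vertices whose adjacency matrix equals A(H) = Σ_{k=0}^{i} (−1)^k · C(2i+1−k, k) · A(P_{n−1})^{2(i−k)+1}. Then the characteristic polynomial of the adjacency matrix of [S(P_n)]_{H}, namely of the block matrix [[0_{n×n}, B(P_n)],[B(P_n)ᵀ, A(H)]], equals x · ∏_{j=1}^{n−1} ( x² − c_j·x − (2cos(πj/n) + 2) ), where c_j = Σ_{k=0}^{i} (−1)^k · C(2i+1−k, k) · (2cos(πj/n))^{2(i−k)+1}. -/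

import Mathlib

open Matrix SimpleGraph

/-- The adjacency matrix of the path graph $P_k$ on `k` vertices `0, 1, …, k-1`
(consecutive vertices adjacent). -/
def pathA (k : ℕ) : Matrix (Fin k) (Fin k) ℝ :=
  Matrix.of fun a b => if (a : ℕ) + 1 = (b : ℕ) ∨ (b : ℕ) + 1 = (a : ℕ) then 1 else 0

/-- The $n\times(n-1)$ vertex–edge incidence matrix of the path graph $P_n$:
edge `j` joins vertices `j` and `j+1`. -/
def pathB (n : ℕ) : Matrix (Fin n) (Fin (n - 1)) ℝ :=
  Matrix.of fun a j => if (a : ℕ) = (j : ℕ) ∨ (a : ℕ) = (j : ℕ) + 1 then 1 else 0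

namespace Stmt12

lemma sum_delta {N : ℕ} (g : ℕ → ℝ) (t : ℕ) :
    (∑ b : Fin N, if (b : ℕ) = t then g (b : ℕ) else 0) = if t < N then g t else 0 := by
  split_ifs with h
  · rw [Finset.sum_eq_single (⟨t, h⟩ : Fin N)]
    · simp
    · intro b _ hb
      rw [if_neg]
      simpa [Fin.ext_iff] using hb
    · simp
  · apply Finset.sum_eq_zero
    intro b _
    have := b.isLt
    rw [if_neg]
    omega

lemma sum_delta2 {N : ℕ} (s t : ℕ) (hs : s < N) :
    (∑ a : Fin N, (if (a : ℕ) = s then (1:ℝ) else 0) * (if (a : ℕ) = t then 1 else 0))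
      = if s = t then 1 else 0 := by
  have : ∀ a : Fin N, (if (a : ℕ) = s then (1:ℝ) else 0) * (if (a : ℕ) = t then 1 else 0)
      = if (a : ℕ) = s then (if s = t then 1 else 0) else 0 := by
    intro a
    split_ifs with h1 h2 h3 <;> simp_all
  rw [Finset.sum_congr rfl fun a _ => this a, sum_delta (fun _ => if s = t then (1:ℝ) else 0) s,
    if_pos hs]

/-- `BᵀB = A(P_{n-1}) + 2I`. -/
lemma BtB (m : ℕ) :
    (pathB (m + 2))ᵀ * pathB (m + 2) = pathA (m + 1) + (2 : ℝ) • 1 := by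
  ext j k
  have hj := j.isLt
  have hk := k.isLt
  have hB : ∀ (a : Fin (m+2)) (l : Fin (m+1)), pathB (m+2) a l
      = (if (a : ℕ) = (l : ℕ) then (1:ℝ) else 0) + (if (a : ℕ) = (l : ℕ) + 1 then 1 else 0) := by
    intro a l
    simp only [pathB, of_apply]
    split_ifs with h1 h2 h3 <;> (try norm_num) <;> omega
  simp only [Matrix.mul_apply, transpose_apply]
  rw [Finset.sum_congr rfl fun a _ => by rw [hB a j, hB a k]]
  have expand : ∀ a : Fin (m+2),
      ((if (a : ℕ) = (j : ℕ) then (1:ℝ) else 0) + (if (a : ℕ) = (j : ℕ) + 1 then 1 else 0)) *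
      ((if (a : ℕ) = (k : ℕ) then (1:ℝ) else 0) + (if (a : ℕ) = (k : ℕ) + 1 then 1 else 0))
      = (if (a : ℕ) = (j : ℕ) then (1:ℝ) else 0) * (if (a : ℕ) = (k : ℕ) then 1 else 0)
      + (if (a : ℕ) = (j : ℕ) then (1:ℝ) else 0) * (if (a : ℕ) = (k : ℕ) + 1 then 1 else 0)
      + (if (a : ℕ) = (j : ℕ) + 1 then (1:ℝ) else 0) * (if (a : ℕ) = (k : ℕ) then 1 else 0)
      + (if (a : ℕ) = (j : ℕ) + 1 then (1:ℝ) else 0) * (if (a : ℕ) = (k : ℕ) + 1 then 1 else 0) := by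
    intro a; ring
  rw [Finset.sum_congr rfl fun a _ => expand a]
  rw [Finset.sum_add_distrib, Finset.sum_add_distrib, Finset.sum_add_distrib,
    sum_delta2 _ _ (by omega), sum_delta2 _ _ (by omega),
    sum_delta2 _ _ (by omega), sum_delta2 _ _ (by omega)]
  simp only [pathA, Matrix.add_apply, Matrix.smul_apply, Matrix.one_apply, of_apply,
    Fin.ext_iff, smul_eq_mul]
  split_ifs <;> (try norm_num) <;> omega


noncomputable def Smat (m : ℕ) : Matrix (Fin (m + 1)) (Fin (m + 1)) ℝ :=
  Matrix.of fun a j => Real.sin (Real.pi * (((j : ℕ) : ℝ) + 1) / ((m : ℝ) + 2) * (((a : ℕ) : ℝ) + 1))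

noncomputable def lam (m : ℕ) (j : Fin (m + 1)) : ℝ :=
  2 * Real.cos (Real.pi * (((j : ℕ) : ℝ) + 1) / ((m : ℝ) + 2))

lemma col_eigen (m : ℕ) (j : Fin (m + 1)) :
    (pathA (m + 1)).mulVec (fun a => Smat m a j) = lam m j • (fun a => Smat m a j) := by
  funext a
  simp only [Matrix.mulVec, dotProduct, Pi.smul_apply, smul_eq_mul, Smat, lam, of_apply]
  set c := Real.pi * (((j : ℕ) : ℝ) + 1) / ((m : ℝ) + 2) with hc
  set g : ℕ → ℝ := fun t => Real.sin (c * ((t : ℝ) + 1)) with hgdef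
  have expand : ∀ b : Fin (m + 1),
      pathA (m + 1) a b * Real.sin (c * (((b : ℕ) : ℝ) + 1))
      = (if (b : ℕ) = (a : ℕ) + 1 then g (b : ℕ) else 0)
      + (if (b : ℕ) + 1 = (a : ℕ) then g (b : ℕ) else 0) := by
    intro b
    simp only [pathA, of_apply, hgdef]
    split_ifs <;> (try ring) <;> omega
  rw [Finset.sum_congr rfl fun b _ => expand b, Finset.sum_add_distrib]
  have h1 : (∑ b : Fin (m + 1), if (b : ℕ) = (a : ℕ) + 1 then g (b : ℕ) else 0)
      = Real.sin (c * (((a : ℕ) : ℝ) + 2)) := by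
    rw [sum_delta g ((a : ℕ) + 1)]
    by_cases h : (a : ℕ) + 1 < m + 1
    · rw [if_pos h, hgdef]
      push_cast
      ring_nf
    · rw [if_neg h]
      have ha : (a : ℕ) = m := by have := a.isLt; omega
      rw [ha]
      have hm2 : ((m : ℝ) + 2) ≠ 0 := by positivity
      have : c * (((m : ℕ) : ℝ) + 2) = (((j : ℕ) + 1 : ℕ) : ℝ) * Real.pi := by
        rw [hc]; push_cast; field_simp
      rw [this, Real.sin_nat_mul_pi]
  have h2 : (∑ b : Fin (m + 1), if (b : ℕ) + 1 = (a : ℕ) then g (b : ℕ) else 0)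
      = Real.sin (c * ((a : ℕ) : ℝ)) := by
    by_cases h0 : (a : ℕ) = 0
    · rw [h0]
      simp only [Nat.cast_zero, mul_zero, Real.sin_zero]
      exact Finset.sum_eq_zero fun b _ => by rw [if_neg]; omega
    · obtain ⟨t, ht⟩ := Nat.exists_eq_succ_of_ne_zero h0
      rw [Finset.sum_congr rfl fun (b : Fin (m + 1)) _ => if_congr (show (b : ℕ) + 1 = (a : ℕ) ↔ (b : ℕ) = t by omega) rfl rfl]
      rw [sum_delta g t, if_pos (by have := a.isLt; omega), hgdef, ht]
      push_cast
      ring_nf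
  rw [h1, h2]
  have e1 : c * (((a : ℕ) : ℝ) + 2) = c * (((a : ℕ) : ℝ) + 1) + c := by ring
  have e2 : c * ((a : ℕ) : ℝ) = c * (((a : ℕ) : ℝ) + 1) - c := by ring
  rw [e1, e2, Real.sin_add, Real.sin_sub]
  ring

lemma A_mul_S (m : ℕ) :
    pathA (m + 1) * Smat m = Smat m * Matrix.diagonal (lam m) := by
  ext a j
  have := congrFun (col_eigen m j) a
  simp only [Matrix.mulVec, dotProduct, Pi.smul_apply, smul_eq_mul] at this
  rw [Matrix.mul_apply, Matrix.mul_diagonal]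
  rw [show (∑ b, pathA (m+1) a b * Smat m b j) = lam m j * Smat m a j from this]
  ring

lemma pow_A_mul_S (m k : ℕ) :
    pathA (m + 1) ^ k * Smat m = Smat m * Matrix.diagonal (lam m) ^ k := by
  induction k with
  | zero => simp
  | succ k ih =>
    rw [pow_succ, pow_succ, Matrix.mul_assoc, A_mul_S, ← Matrix.mul_assoc, ih, Matrix.mul_assoc]

lemma lam_injective (m : ℕ) : Function.Injective (lam m) := by
  intro j k h
  have hmem : ∀ l : Fin (m + 1), Real.pi * (((l : ℕ) : ℝ) + 1) / ((m : ℝ) + 2) ∈ Set.Icc 0 Real.pi := by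
    intro l
    have hl : ((l : ℕ) : ℝ) + 1 ≤ (m : ℝ) + 2 := by
      have := l.isLt
      push_cast
      have : ((l : ℕ) : ℝ) ≤ m := by exact_mod_cast Nat.le_of_lt_succ this
      linarith
    constructor
    · positivity
    · rw [div_le_iff₀ (by positivity)]
      nlinarith [Real.pi_pos]
  have := Real.injOn_cos (hmem j) (hmem k) (by
    have : Real.cos (Real.pi * (((j : ℕ) : ℝ) + 1) / ((m : ℝ) + 2))
        = Real.cos (Real.pi * (((k : ℕ) : ℝ) + 1) / ((m : ℝ) + 2)) := by
      have h' := h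
      simp only [lam] at h'
      linarith
    exact this)
  have hπ := Real.pi_pos
  have hm2 : (0 : ℝ) < (m : ℝ) + 2 := by positivity
  have : (j : ℕ) = (k : ℕ) := by
    field_simp at this
    exact_mod_cast (by linarith : ((j : ℕ) : ℝ) = ((k : ℕ) : ℝ))
  exact Fin.ext this

lemma col_ne_zero (m : ℕ) (j : Fin (m + 1)) : (fun a => Smat m a j) ≠ 0 := by
  intro h
  have h0 := congrFun h (0 : Fin (m + 1))
  simp only [Smat, of_apply, Pi.zero_apply] at h0
  have hπ := Real.pi_pos
  have hm2 : (0 : ℝ) < (m : ℝ) + 2 := by positivity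
  have hj : ((j : ℕ) : ℝ) + 1 ≤ (m : ℝ) + 1 := by
    have := j.isLt
    have : ((j : ℕ) : ℝ) ≤ m := by exact_mod_cast Nat.le_of_lt_succ this
    linarith
  have harg : 0 < Real.pi * (((j : ℕ) : ℝ) + 1) / ((m : ℝ) + 2) * (((0 : Fin (m+1)) : ℕ) + 1 : ℝ) := by
    simp only [Fin.val_zero, Nat.cast_zero, zero_add, mul_one]
    positivity
  have harg2 : Real.pi * (((j : ℕ) : ℝ) + 1) / ((m : ℝ) + 2) * (((0 : Fin (m+1)) : ℕ) + 1 : ℝ) < Real.pi := by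
    simp only [Fin.val_zero, Nat.cast_zero, zero_add, mul_one]
    rw [div_lt_iff₀ hm2]
    nlinarith
  exact absurd h0 (ne_of_gt (Real.sin_pos_of_pos_of_lt_pi harg harg2))

lemma cols_linearIndependent (m : ℕ) :
    LinearIndependent ℝ (fun j : Fin (m + 1) => (fun a => Smat m a j : Fin (m + 1) → ℝ)) := by
  apply Module.End.eigenvectors_linearIndependent' (Matrix.mulVecLin (pathA (m + 1))) (lam m)
    (lam_injective m)
  intro j
  constructor
  · rw [Module.End.mem_eigenspace_iff]
    exact col_eigen m j
  · exact col_ne_zero m j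

lemma det_Smat_ne_zero (m : ℕ) : (Smat m).det ≠ 0 := by
  intro hdet
  obtain ⟨v, hv, hv0⟩ := (Matrix.exists_mulVec_eq_zero_iff).2 hdet
  have := (Fintype.linearIndependent_iff.1 (cols_linearIndependent m)) v ?_
  · exact hv (funext fun j => this j)
  · funext a
    have := congrFun hv0 a
    simp only [Matrix.mulVec, dotProduct, Pi.zero_apply] at this
    simp only [Finset.sum_apply, Pi.smul_apply, smul_eq_mul, Pi.zero_apply]
    rw [← this]
    exact Finset.sum_congr rfl fun j _ => by ring

lemma alt_sum (m : ℕ) (j : Fin (m + 1)) :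
    ∑ a : Fin (m + 2), ((-1 : ℝ)) ^ (a : ℕ) * pathB (m + 2) a j = 0 := by
  have hB : ∀ a : Fin (m + 2), pathB (m + 2) a j
      = (if (a : ℕ) = (j : ℕ) then (1:ℝ) else 0) + (if (a : ℕ) = (j : ℕ) + 1 then 1 else 0) := by
    intro a
    simp only [pathB, of_apply]
    split_ifs <;> (try norm_num) <;> omega
  have expand : ∀ a : Fin (m + 2), ((-1 : ℝ)) ^ (a : ℕ) * pathB (m + 2) a j
      = (if (a : ℕ) = (j : ℕ) then ((-1:ℝ))^(a:ℕ) else 0)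
      + (if (a : ℕ) = (j : ℕ) + 1 then ((-1:ℝ))^(a:ℕ) else 0) := by
    intro a
    rw [hB a]
    split_ifs <;> (try ring) <;> omega
  rw [Finset.sum_congr rfl fun a _ => expand a, Finset.sum_add_distrib,
    sum_delta (fun t => ((-1:ℝ))^t) (j : ℕ), sum_delta (fun t => ((-1:ℝ))^t) ((j : ℕ) + 1),
    if_pos (by omega : (j:ℕ) < m + 2), if_pos (by omega : (j:ℕ) + 1 < m + 2), pow_succ]
  ring

end Stmt12

open Stmt12 in
/-- `A`-characteristic polynomial of $[S(P_n)]_{H}$ where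
$A(H) = P_{P_{2i+1}}(A(P_{n-1}))$. -/
theorem stmt_12 (n i : ℕ) (hn : 3 ≤ n) (hi : i + 1 ≤ (n - 1) / 2)
    (H : SimpleGraph (Fin (n - 1))) [DecidableRel H.Adj]
    (hH : H.adjMatrix ℝ = ∑ k ∈ Finset.range (i + 1),
      ((-1 : ℝ) ^ k * (Nat.choose (2 * i + 1 - k) k : ℝ)) •
        (pathA (n - 1)) ^ (2 * (i - k) + 1))
    (x : ℝ) :
    (x • (1 : Matrix (Fin n ⊕ Fin (n - 1)) (Fin n ⊕ Fin (n - 1)) ℝ) -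
        Matrix.fromBlocks 0 (pathB n) (pathB n)ᵀ (H.adjMatrix ℝ)).det
      = x * ∏ j : Fin (n - 1),
          (x ^ 2 -
            (∑ k ∈ Finset.range (i + 1),
              (-1 : ℝ) ^ k * (Nat.choose (2 * i + 1 - k) k : ℝ) *
                (2 * Real.cos (Real.pi * ((j : ℕ) + 1) / n)) ^ (2 * (i - k) + 1)) * x -
            (2 * Real.cos (Real.pi * ((j : ℕ) + 1) / n) + 2)) := by
  obtain ⟨m, rfl⟩ : ∃ m, n = m + 2 := ⟨n - 2, by omega⟩
  rw [hH]
  show (x • (1 : Matrix (Fin (m+2) ⊕ Fin (m+1)) (Fin (m+2) ⊕ Fin (m+1)) ℝ) -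
      (Matrix.fromBlocks 0 (pathB (m+2)) (pathB (m+2))ᵀ
        (∑ k ∈ Finset.range (i + 1), ((-1 : ℝ) ^ k * ((2 * i + 1 - k).choose k : ℝ)) •
          pathA (m+1) ^ (2 * (i - k) + 1)) :
        Matrix (Fin (m+2) ⊕ Fin (m+1)) (Fin (m+2) ⊕ Fin (m+1)) ℝ)).det =
    x * ∏ j : Fin (m+1),
      (x ^ 2 - (∑ k ∈ Finset.range (i + 1),
          (-1 : ℝ) ^ k * ((2 * i + 1 - k).choose k : ℝ) *
            (2 * Real.cos (Real.pi * (((j : ℕ) : ℝ) + 1) / ((m + 2 : ℕ) : ℝ))) ^ (2 * (i - k) + 1)) * x -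
        (2 * Real.cos (Real.pi * (((j : ℕ) : ℝ) + 1) / ((m + 2 : ℕ) : ℝ)) + 2))
  set P : Matrix (Fin (m+1)) (Fin (m+1)) ℝ :=
    ∑ k ∈ Finset.range (i + 1), ((-1 : ℝ) ^ k * (Nat.choose (2 * i + 1 - k) k : ℝ)) •
      (pathA (m+1)) ^ (2 * (i - k) + 1) with hP
  rcases eq_or_ne x 0 with rfl | hx
  · have hdet : (Matrix.fromBlocks 0 (pathB (m+2)) (pathB (m+2))ᵀ P).det = 0 := by
      rw [← Matrix.exists_vecMul_eq_zero_iff]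
      refine ⟨Sum.elim (fun a : Fin (m+2) => (-1 : ℝ)^(a : ℕ)) 0, ?_, ?_⟩
      · intro h
        have := congrFun h (Sum.inl 0)
        simp at this
      · funext s
        rcases s with b | j
        · simp [Matrix.vecMul, dotProduct, Fintype.sum_sum_type, Matrix.fromBlocks]
        · simp only [Matrix.vecMul, dotProduct, Fintype.sum_sum_type, Matrix.fromBlocks,
            Sum.elim_inl, Sum.elim_inr, of_apply, Pi.zero_apply, zero_mul,
            Finset.sum_const_zero, add_zero, transpose_apply]
          exact alt_sum m j
    simp only [zero_smul, zero_sub, Matrix.det_neg, zero_mul]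
    exact mul_eq_zero_of_right _ hdet
  · set B0 : Matrix (Fin (m+2)) (Fin (m+1)) ℝ := pathB (m+2) with hB0
    letI : Invertible (x • (1 : Matrix (Fin (m+2)) (Fin (m+2)) ℝ)) :=
      ⟨x⁻¹ • 1, by simp [Matrix.smul_mul, Matrix.mul_smul, smul_smul, inv_mul_cancel₀ hx,
          mul_inv_cancel₀ hx],
        by simp [Matrix.smul_mul, Matrix.mul_smul, smul_smul, inv_mul_cancel₀ hx,
          mul_inv_cancel₀ hx]⟩
    have block_eq : x • (1 : Matrix (Fin (m+2) ⊕ Fin (m+1)) (Fin (m+2) ⊕ Fin (m+1)) ℝ) -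
        Matrix.fromBlocks 0 B0 B0ᵀ P
        = Matrix.fromBlocks (x • 1) (-B0) (-B0ᵀ) (x • 1 - P) := by
      rw [← Matrix.fromBlocks_one, Matrix.fromBlocks_smul, sub_eq_add_neg, Matrix.fromBlocks_neg,
        Matrix.fromBlocks_add]
      congr 1 <;> simp [sub_eq_add_neg]
    rw [block_eq, Matrix.det_fromBlocks₁₁]
    have hinv : ⅟(x • (1 : Matrix (Fin (m+2)) (Fin (m+2)) ℝ)) = x⁻¹ • 1 := rfl
    rw [hinv]
    have hBtB0 : B0ᵀ * B0 = pathA (m+1) + (2:ℝ) • 1 := BtB m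
    have hBtB : (-B0ᵀ) * (x⁻¹ • (1 : Matrix (Fin (m+2)) (Fin (m+2)) ℝ)) * (-B0)
        = x⁻¹ • (pathA (m+1) + (2:ℝ) • 1) := by
      rw [← hBtB0]
      simp [Matrix.neg_mul, Matrix.mul_neg, Matrix.mul_smul, Matrix.smul_mul, Matrix.mul_one]
    have hx2 : x⁻¹ * x ^ 2 = x := by
      rw [sq, ← mul_assoc, inv_mul_cancel₀ hx, one_mul]
    have hsc : (x • 1 - P) - (-B0ᵀ) * (x⁻¹ • (1 : Matrix (Fin (m+2)) (Fin (m+2)) ℝ)) * (-B0)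
        = x⁻¹ • (x^2 • 1 - x • P - (pathA (m+1) + (2:ℝ) • 1)) := by
      rw [hBtB, smul_sub, smul_sub, smul_smul, smul_smul, inv_mul_cancel₀ hx, one_smul, hx2]
    rw [hsc, Matrix.det_smul, Matrix.det_smul, Matrix.det_one, mul_one, Fintype.card_fin,
      Fintype.card_fin]
    -- determinant of the polynomial in pathA via the sine similarity
    have hPS : P * Smat m = Smat m * ∑ k ∈ Finset.range (i + 1),
        ((-1 : ℝ) ^ k * (Nat.choose (2 * i + 1 - k) k : ℝ)) •
          (Matrix.diagonal (lam m)) ^ (2 * (i - k) + 1) := by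
      rw [hP, Finset.sum_mul, Matrix.mul_sum]
      exact Finset.sum_congr rfl fun k _ => by
        rw [Matrix.smul_mul, pow_A_mul_S, Matrix.mul_smul]
    have hdiag : (x^2 • (1 : Matrix (Fin (m+1)) (Fin (m+1)) ℝ)
          - x • (∑ k ∈ Finset.range (i + 1),
              ((-1 : ℝ) ^ k * (Nat.choose (2 * i + 1 - k) k : ℝ)) •
                (Matrix.diagonal (lam m)) ^ (2 * (i - k) + 1))
          - (Matrix.diagonal (lam m) + (2:ℝ) • 1))
        = Matrix.diagonal (fun j => x^2 - x * (∑ k ∈ Finset.range (i + 1),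
            (-1 : ℝ) ^ k * (Nat.choose (2 * i + 1 - k) k : ℝ) * (lam m j) ^ (2 * (i - k) + 1))
            - (lam m j + 2)) := by
      ext a b
      by_cases hab : a = b
      · subst hab
        simp only [Matrix.sub_apply, Matrix.add_apply, Matrix.smul_apply, Matrix.one_apply_eq,
          Matrix.diagonal_apply_eq, Matrix.sum_apply, Matrix.diagonal_pow, smul_eq_mul,
          Pi.pow_apply]
        ring
      · simp [Matrix.sub_apply, Matrix.add_apply, Matrix.smul_apply, Matrix.one_apply_ne hab,
          Matrix.diagonal_apply_ne _ hab, Matrix.sum_apply, Matrix.diagonal_pow, Pi.pow_apply]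
    have MS : (x^2 • 1 - x • P - (pathA (m+1) + (2:ℝ) • 1)) * Smat m
        = Smat m * Matrix.diagonal (fun j => x^2 - x * (∑ k ∈ Finset.range (i + 1),
            (-1 : ℝ) ^ k * (Nat.choose (2 * i + 1 - k) k : ℝ) * (lam m j) ^ (2 * (i - k) + 1))
            - (lam m j + 2)) := by
      calc (x^2 • 1 - x • P - (pathA (m+1) + (2:ℝ) • 1)) * Smat m
          = x^2 • Smat m - x • (P * Smat m) - (pathA (m+1) * Smat m + (2:ℝ) • Smat m) := by
            rw [sub_mul, sub_mul, add_mul, Matrix.smul_mul, Matrix.smul_mul, Matrix.smul_mul,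
              Matrix.one_mul]
        _ = Smat m * (x^2 • (1 : Matrix (Fin (m+1)) (Fin (m+1)) ℝ)
              - x • (∑ k ∈ Finset.range (i + 1),
                  ((-1 : ℝ) ^ k * (Nat.choose (2 * i + 1 - k) k : ℝ)) •
                    (Matrix.diagonal (lam m)) ^ (2 * (i - k) + 1))
              - (Matrix.diagonal (lam m) + (2:ℝ) • 1)) := by
            rw [hPS, A_mul_S, Matrix.mul_sub, Matrix.mul_sub, Matrix.mul_add, Matrix.mul_smul,
              Matrix.mul_smul, Matrix.mul_smul, Matrix.mul_one]
        _ = _ := by rw [hdiag]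
    have hdetM : (x^2 • 1 - x • P - (pathA (m+1) + (2:ℝ) • 1)).det
        = ∏ j : Fin (m+1), (x^2 - x * (∑ k ∈ Finset.range (i + 1),
            (-1 : ℝ) ^ k * (Nat.choose (2 * i + 1 - k) k : ℝ) * (lam m j) ^ (2 * (i - k) + 1))
            - (lam m j + 2)) := by
      have hd := congrArg Matrix.det MS
      rw [Matrix.det_mul, Matrix.det_mul, Matrix.det_diagonal] at hd
      exact mul_right_cancel₀ (det_Smat_ne_zero m) (by rw [hd, mul_comm])
    rw [hdetM]
    have hxpow : x ^ (m+2) * (x⁻¹) ^ (m+1) = x := by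
      have hx1 : x * x⁻¹ = 1 := mul_inv_cancel₀ hx
      calc x ^ (m+2) * (x⁻¹) ^ (m+1) = x * (x * x⁻¹) ^ (m+1) := by ring
        _ = x := by rw [hx1, one_pow, mul_one]
    rw [← mul_assoc, hxpow]
    refine congrArg (x * ·) (Finset.prod_congr rfl fun j _ => ?_)
    simp only [lam]
    push_cast
    ring
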